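/- Assume q^{2l} = 1 where l ≥ 2 is the smallest positive integer with this property. Let c, x₀, c'₂ ∈ ℂ and x₋ ∈ ℂ with x₋ ≠ 0 and c − λx₀ ≠ 0; set d² := c² − λ²c'₂. Then the l-dimensional representation of B on ℂ^l defined by ρ_C v_p = c v_p, ρ₀ v_p = (q^{2p} x₀ − q^p [p] c) v_p, ρ₋ v_p = x₋ v_{p+1 mod l}, ρ₊ v_p = x₋⁻¹ λ⁻² ( −d² + (1+q⁻²) c (c−λx₀) q^{2p} − q⁻² (c−λx₀)² q^{4p} ) v_{p−1 mod l} is irreducible: the only subspaces of ℂ^l invariant under all four operators are 0 and ℂ^l. -/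

import Mathlib

noncomputable section

namespace SL2q

/-- The q-number [p] = (q^p − q^{−p})/(q − q⁻¹). -/
def qNum (q : ℂ) (p : ℕ) : ℂ := (q ^ p - q⁻¹ ^ p) / (q - q⁻¹)

/-- the explicit l-dimensional periodic representation with
x₋ ≠ 0 and c − λx₀ ≠ 0 (basis v₀,…,v_{l−1}, indices mod l) is irreducible. -/
theorem periodic_rep_irreducible (q : ℂ) (hq : q ≠ 0) (hq2 : q ^ 2 ≠ 1)
    (l : ℕ) (hl : 2 ≤ l) (hq2l : q ^ (2 * l) = 1)
    (hmin : ∀ m : ℕ, 0 < m → m < l → q ^ (2 * m) ≠ 1)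
    (c x0 c2 xm : ℂ) (hxm : xm ≠ 0) (hz : c - (q - q⁻¹) * x0 ≠ 0) :
    let d2 : ℂ := c ^ 2 - (q - q⁻¹) ^ 2 * c2
    let MC : Matrix (Fin l) (Fin l) ℂ := c • 1
    let M0 : Matrix (Fin l) (Fin l) ℂ :=
      Matrix.diagonal fun p => q ^ (2 * (p : ℕ)) * x0 - q ^ (p : ℕ) * qNum q (p : ℕ) * c
    let Mm : Matrix (Fin l) (Fin l) ℂ :=
      Matrix.of fun i j => if (i : ℕ) = ((j : ℕ) + 1) % l then xm else 0
    let Mp : Matrix (Fin l) (Fin l) ℂ :=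
      Matrix.of fun i j =>
        if ((i : ℕ) + 1) % l = (j : ℕ) then
          xm⁻¹ * ((q - q⁻¹) ^ 2)⁻¹ *
            (-d2 + (1 + q⁻¹ ^ 2) * c * (c - (q - q⁻¹) * x0) * q ^ (2 * (j : ℕ))
              - q⁻¹ ^ 2 * (c - (q - q⁻¹) * x0) ^ 2 * q ^ (4 * (j : ℕ)))
        else 0
    ∀ W : Submodule ℂ (Fin l → ℂ),
      (∀ v ∈ W, M0.mulVec v ∈ W) → (∀ v ∈ W, Mp.mulVec v ∈ W) →
      (∀ v ∈ W, Mm.mulVec v ∈ W) → (∀ v ∈ W, MC.mulVec v ∈ W) →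
      W = ⊥ ∨ W = ⊤ := by
  intro d2 MC M0 Mm Mp W hW0 hWp hWm hWC
  haveI : NeZero l := ⟨by omega⟩
  set lam : ℂ := q - q⁻¹ with hlam
  have hlam0 : lam ≠ 0 := by
    intro h
    apply hq2
    have h1 : q * lam = q ^ 2 - 1 := by
      rw [hlam, mul_sub, mul_inv_cancel₀ hq]; ring
    rw [h, mul_zero] at h1
    linear_combination -h1
  set μ : Fin l → ℂ :=
    fun p => q ^ (2 * (p : ℕ)) * x0 - q ^ (p : ℕ) * qNum q (p : ℕ) * c with hμdef
  have hM0 : M0 = Matrix.diagonal μ := rfl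
  have hmulmu : ∀ p : Fin l, lam * μ p = c - q ^ (2 * (p : ℕ)) * (c - lam * x0) := by
    intro p
    simp only [hμdef, qNum, ← hlam]
    rw [two_mul, pow_add, inv_pow]
    have hp : q ^ (p : ℕ) ≠ 0 := pow_ne_zero _ hq
    field_simp
    ring
  -- injectivity of μ
  have haux : ∀ a b : Fin l, (a : ℕ) < (b : ℕ) →
      q ^ (2 * (a : ℕ)) = q ^ (2 * (b : ℕ)) → False := by
    intro a b hlt hab
    have h1 : q ^ (2 * (a : ℕ)) * q ^ (2 * ((b : ℕ) - (a : ℕ))) = q ^ (2 * (b : ℕ)) := by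
      rw [← pow_add]; congr 1; omega
    rw [← hab] at h1
    have h2 : q ^ (2 * ((b : ℕ) - (a : ℕ))) = 1 :=
      mul_left_cancel₀ (pow_ne_zero _ hq) (by rw [h1, mul_one])
    exact hmin _ (by omega) (by have := b.isLt; omega) h2
  have hqpow_inj : ∀ a b : Fin l, q ^ (2 * (a : ℕ)) = q ^ (2 * (b : ℕ)) → a = b := by
    intro a b hab
    rcases lt_trichotomy (a : ℕ) (b : ℕ) with h | h | h
    · exact (haux a b h hab).elim
    · exact Fin.ext h
    · exact (haux b a h hab.symm).elim
  have hmuinj : Function.Injective μ := by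
    intro a b hab
    have h1 : lam * μ a = lam * μ b := by rw [hab]
    rw [hmulmu, hmulmu] at h1
    have h2 : q ^ (2 * (a : ℕ)) * (c - lam * x0) = q ^ (2 * (b : ℕ)) * (c - lam * x0) := by
      linear_combination -h1
    exact hqpow_inj a b (mul_right_cancel₀ hz h2)
  -- mulVec by M0 is pointwise multiplication by μ
  have hM0mul : ∀ w : Fin l → ℂ, M0.mulVec w = fun i => μ i * w i := by
    intro w; funext i
    rw [hM0]
    exact Matrix.mulVec_diagonal _ _ _
  -- closure of W under products of (μ · - μ j)
  have key : ∀ v ∈ W, ∀ s : Finset (Fin l),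
      (fun i => (∏ j ∈ s, (μ i - μ j)) * v i) ∈ W := by
    intro v hv s
    induction s using Finset.induction_on with
    | empty => simpa using hv
    | @insert j s hj ih =>
      have h1 : M0.mulVec (fun i => (∏ k ∈ s, (μ i - μ k)) * v i) ∈ W := hW0 _ ih
      have h2 := W.sub_mem h1 (W.smul_mem (μ j) ih)
      convert h2 using 1
      funext i
      rw [hM0mul]
      simp only [Finset.prod_insert hj, Pi.sub_apply, Pi.smul_apply, smul_eq_mul]
      ring
  -- each basis vector shifts under Mm
  have hshift : ∀ p : Fin l, Pi.single p (1 : ℂ) ∈ W → Pi.single (p + 1) (1 : ℂ) ∈ W := by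
    intro p hp
    have hmem := hWm _ hp
    have heq : Mm.mulVec (Pi.single p (1 : ℂ)) = xm • (Pi.single (p + 1) 1 : Fin l → ℂ) := by
      funext i
      have hval : ((p + 1 : Fin l) : ℕ) = ((p : ℕ) + 1) % l := by
        rw [Fin.add_def]
        congr 1
        simp [Fin.val_one', Nat.mod_eq_of_lt (by omega : 1 < l)]
      have hiff : ((i : ℕ) = ((p : ℕ) + 1) % l) ↔ i = p + 1 := by
        rw [← hval, Fin.ext_iff]
      simp only [Matrix.mulVec, dotProduct, Mm, Matrix.of_apply,
        Pi.single_apply, mul_ite, mul_one, mul_zero, Pi.smul_apply, smul_eq_mul]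
      rw [Finset.sum_ite_eq' Finset.univ p (fun j => if (i : ℕ) = ((j : ℕ) + 1) % l then xm else 0)]
      simp only [Finset.mem_univ, if_true]
      simp only [hiff]
    have : Pi.single (p + 1) (1 : ℂ) = xm⁻¹ • Mm.mulVec (Pi.single p (1 : ℂ)) := by
      rw [heq, smul_smul, inv_mul_cancel₀ hxm, one_smul]
    rw [this]
    exact W.smul_mem _ hmem
  -- main argument
  by_cases hbot : W = ⊥
  · exact Or.inl hbot
  right
  obtain ⟨v, hvW, hv0⟩ := Submodule.exists_mem_ne_zero_of_ne_bot hbot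
  obtain ⟨p, hp⟩ : ∃ p, v p ≠ 0 := by
    by_contra h
    push_neg at h
    exact hv0 (funext h)
  -- extract Pi.single p 1
  have hw := key v hvW (Finset.univ.erase p)
  set w : Fin l → ℂ := fun i => (∏ j ∈ Finset.univ.erase p, (μ i - μ j)) * v i with hwdef
  have hwp : w p ≠ 0 := by
    apply mul_ne_zero _ hp
    apply Finset.prod_ne_zero_iff.mpr
    intro j hj
    have : j ≠ p := (Finset.mem_erase.mp hj).1
    exact sub_ne_zero_of_ne fun hh => this (hmuinj hh.symm)
  have hwzero : ∀ i, i ≠ p → w i = 0 := by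
    intro i hi
    apply mul_eq_zero_of_left
    exact Finset.prod_eq_zero (Finset.mem_erase.mpr ⟨hi, Finset.mem_univ i⟩) (sub_self _)
  have hsingle : Pi.single p (1 : ℂ) ∈ W := by
    have : Pi.single p (1 : ℂ) = (w p)⁻¹ • w := by
      funext i
      by_cases h : i = p
      · subst h; simp [Pi.single_apply, inv_mul_cancel₀ hwp]
      · simp [Pi.single_apply, h, hwzero i h]
    rw [this]
    exact W.smul_mem _ hw
  -- all basis vectors are in W
  open Fin.NatCast in
  have hall : ∀ k : ℕ, Pi.single (p + (k : Fin l)) (1 : ℂ) ∈ W := by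
    intro k
    induction k with
    | zero => simpa using hsingle
    | succ n ih =>
      have : ((n + 1 : ℕ) : Fin l) = (n : Fin l) + 1 := by push_cast; ring
      rw [this, ← add_assoc]
      exact hshift _ ih
  open Fin.NatCast in
  have hallsingle : ∀ i : Fin l, Pi.single i (1 : ℂ) ∈ W := by
    intro i
    have h := hall ((i - p : Fin l) : ℕ)
    rwa [Fin.cast_val_eq_self, add_sub_cancel] at h
  -- conclude W = ⊤
  apply eq_top_iff.mpr
  intro u _
  have : u = ∑ i, u i • (Pi.single i 1 : Fin l → ℂ) := by
    funext j
    simp [Pi.single_apply, Finset.sum_ite_eq']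
  rw [this]
  exact W.sum_mem fun i _ => W.smul_mem _ (hallsingle i)

end SL2q
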